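/- arXiv:1106.5099 — 3 statements merged into one kernel-verified Lean document; each statement's English description precedes it below -/
import Mathlib

section
/- Let {G_m} be a tower of finitely generated abelian groups such that for every prime p the inverse limit of the tower {G_m ⊗_ℤ ℤ_p} (with the transition maps induced by those of {G_m}) is the trivial group. Then the inverse limit of the tower {G_m} is the trivial group. -/
open TensorProduct

/-- Universe-0 version: if `g ⊗ 1 = 0` in `G ⊗ ℤ_p` for every prime `p` and `G` is a
finitely generated abelian group, then `g = 0`. -/
private lemma eq_zero_of_tmul_padic_eq_zero₀ {G : Type} [AddCommGroup G] [Module.Finite ℤ G]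
    (g : G) (hg : ∀ (p : ℕ) [Fact p.Prime], (g ⊗ₜ[ℤ] (1 : ℤ_[p]) : G ⊗[ℤ] ℤ_[p]) = 0) :
    g = 0 := by
  have key : ∀ p : ℕ, p.Prime → ∃ c : ℤ, (1 - c * p) • g = 0 := by
    intro p hp
    haveI : Fact p.Prime := ⟨hp⟩
    have hdiv : ∀ k : ℕ, g ∈ ((Ideal.span {(p : ℤ)}) ^ k • ⊤ : Submodule ℤ G) := by
      intro k
      set I : Ideal ℤ := Ideal.span {((p ^ k : ℕ) : ℤ)} with hI
      let θ : ℤ_[p] →ₗ[ℤ] (ℤ ⧸ I) :=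
        (((Int.quotientSpanNatEquivZMod (p ^ k)).symm.toRingHom.comp
          (PadicInt.toZModPow k)).toAddMonoidHom).toIntLinearMap
      have h0 : (LinearMap.lTensor G θ) (g ⊗ₜ (1 : ℤ_[p])) = 0 := by
        rw [hg p]; simp
      rw [LinearMap.lTensor_tmul] at h0
      have hθ1 : θ 1 = Ideal.Quotient.mk I 1 := by
        show ((Int.quotientSpanNatEquivZMod (p ^ k)).symm
          ((PadicInt.toZModPow k) 1) : ℤ ⧸ I) = _
        rw [map_one, map_one, map_one]
      rw [hθ1] at h0
      have h1 := congrArg (TensorProduct.tensorQuotEquivQuotSMul G I) h0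
      rw [TensorProduct.tensorQuotEquivQuotSMul_tmul_mk, one_smul, map_zero] at h1
      have h2 : g ∈ (I • ⊤ : Submodule ℤ G) := by
        rwa [← Submodule.Quotient.mk_eq_zero]
      rwa [hI, show ((p ^ k : ℕ) : ℤ) = (p : ℤ) ^ k by push_cast; ring,
        ← Ideal.span_singleton_pow] at h2
    have hmem : g ∈ (⨅ i : ℕ, (Ideal.span {(p : ℤ)}) ^ i • (⊤ : Submodule ℤ G)) := by
      rw [Submodule.mem_iInf]; exact hdiv
    obtain ⟨r, hr⟩ := (Ideal.mem_iInf_smul_pow_eq_bot_iff (Ideal.span {(p : ℤ)}) g).mp hmem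
    obtain ⟨a, ha⟩ := Ideal.mem_span_singleton'.mp r.2
    refine ⟨a, ?_⟩
    have : ((a * p) : ℤ) • g = g := by rw [show ((a * p) : ℤ) = (r : ℤ) by rw [← ha], hr]
    rw [sub_smul, one_smul, this, sub_self]
  -- now conclude g = 0
  obtain ⟨c₂, hc₂⟩ := key 2 Nat.prime_two
  have hord2 : ((addOrderOf g : ℕ) : ℤ) ∣ (1 - c₂ * 2) := by
    rwa [addOrderOf_dvd_iff_zsmul_eq_zero]
  have hne : (1 - c₂ * 2 : ℤ) ≠ 0 := by omega
  have hdne : addOrderOf g ≠ 0 := by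
    intro h0
    rw [h0] at hord2
    exact hne (zero_dvd_iff.mp (by exact_mod_cast hord2))
  by_contra hgne
  have hd1 : addOrderOf g ≠ 1 := fun h1 => hgne (AddMonoid.addOrderOf_eq_one_iff.mp h1)
  set d := addOrderOf g with hd
  have hd2 : 2 ≤ d := by omega
  set q := d.minFac with hq
  have hqp : q.Prime := Nat.minFac_prime hd1
  obtain ⟨cq, hcq⟩ := key q hqp
  have hordq : ((d : ℕ) : ℤ) ∣ (1 - cq * q) := by
    rw [hd, addOrderOf_dvd_iff_zsmul_eq_zero]; exact hcq
  have hqd : (q : ℤ) ∣ (d : ℤ) := Int.natCast_dvd_natCast.mpr (Nat.minFac_dvd d)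
  have : (q : ℤ) ∣ 1 := by
    have h1 : (q : ℤ) ∣ (1 - cq * q) := dvd_trans hqd hordq
    have h2 : (q : ℤ) ∣ cq * q := Dvd.intro_left cq rfl
    have h3 := dvd_add h1 h2
    simpa using h3
  have := Int.le_of_dvd one_pos this
  have := hqp.two_le
  omega

/-- If `g ⊗ 1 = 0` in `G ⊗ ℤ_p` for every prime `p` and `G` is a finitely generated
abelian group, then `g = 0`. -/
private lemma eq_zero_of_tmul_padic_eq_zero {G : Type*} [AddCommGroup G] [AddGroup.FG G]
    (g : G) (hg : ∀ (p : ℕ) [Fact p.Prime], (g ⊗ₜ[ℤ] (1 : ℤ_[p]) : G ⊗[ℤ] ℤ_[p]) = 0) :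
    g = 0 := by
  haveI : Module.Finite ℤ G := Module.Finite.iff_addGroup_fg.mpr ‹_›
  haveI : Countable G := by
    obtain ⟨n, f, hf⟩ := Module.Finite.exists_fin' ℤ G
    exact hf.countable
  haveI : Small.{0} G := Countable.toSmall G
  let e : Shrink.{0} G ≃ₗ[ℤ] G := Shrink.linearEquiv ℤ G
  haveI : Module.Finite ℤ (Shrink.{0} G) := Module.Finite.equiv e.symm
  have hsh : e.symm g = 0 := by
    apply eq_zero_of_tmul_padic_eq_zero₀
    intro p _
    have h0 : (LinearMap.rTensor ℤ_[p] (e.symm : G →ₗ[ℤ] Shrink.{0} G))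
        (g ⊗ₜ (1 : ℤ_[p])) = 0 := by rw [hg p]; simp
    rwa [LinearMap.rTensor_tmul] at h0
  have := congrArg e hsh
  rwa [LinearEquiv.apply_symm_apply, map_zero] at this

set_option maxHeartbeats 1000000 in
/-- Let `{G m}` be a tower of finitely generated abelian groups such that for every
prime `p` the inverse limit of the tower `{G m ⊗[ℤ] ℤ_[p]}` (with the induced transition
maps) is trivial.  Then the inverse limit of the tower `{G m}` is trivial. -/
theorem invLimit_trivial_of_padic_tensor_limits_trivial
    {G : ℕ → Type*} [∀ m, AddCommGroup (G m)] [∀ m, AddGroup.FG (G m)]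
    (f : ∀ m, G (m + 1) →+ G m)
    (h : ∀ (p : ℕ) [Fact p.Prime],
      ∀ y : ∀ m, (G m) ⊗[ℤ] ℤ_[p],
        (∀ m, LinearMap.rTensor ℤ_[p] (f m).toIntLinearMap (y (m + 1)) = y m) → y = 0) :
    ∀ x : ∀ m, G m, (∀ m, f m (x (m + 1)) = x m) → x = 0 := by
  intro x hx
  funext m
  refine eq_zero_of_tmul_padic_eq_zero (G := G m) (x m) ?_
  intro p hp
  have hy := @h p hp (fun m => x m ⊗ₜ (1 : ℤ_[p])) (fun m => by
    rw [LinearMap.rTensor_tmul]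
    simp [hx m])
  have := congrFun hy m
  simpa using this
end

section
/- Let {G_n, f_n : G_{n+1} → G_n} be a tower of abelian groups satisfying the Mittag-Leffler condition. Then lim¹ G_n = 0; explicitly, the homomorphism ∏_n G_n → ∏_n G_n sending (x_n) to (x_n − f_n(x_{n+1})) is surjective. -/
set_option linter.unusedSectionVars false


/-- The composite transition map `G (i + k) →+ G i` of a tower of abelian groups
`{G n, f n : G (n+1) →+ G n}`. -/
def towerCompMap {G : ℕ → Type*} [∀ n, AddCommGroup (G n)]
    (f : ∀ n, G (n + 1) →+ G n) (i : ℕ) : ∀ k : ℕ, G (i + k) →+ G i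
  | 0 => AddMonoidHom.id (G i)
  | (k + 1) => (towerCompMap f i k).comp (f (i + k))

/-- A tower of abelian groups `{G n, f n : G (n+1) →+ G n}` satisfies the
**Mittag-Leffler condition** if for every `i` there is a `j ≥ i` such that for all
`k ≥ j` the image of `G k → G i` equals the image of `G j → G i`. -/
def TowerMittagLeffler {G : ℕ → Type*} [∀ n, AddCommGroup (G n)]
    (f : ∀ n, G (n + 1) →+ G n) : Prop :=
  ∀ i, ∃ j, ∀ k, (towerCompMap f i (j + k)).range = (towerCompMap f i j).range

section
variable {G : ℕ → Type*} [∀ n, AddCommGroup (G n)] (f : ∀ n, G (n + 1) →+ G n)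

lemma cast_apply' (y : ∀ n, G n) {a b : ℕ} (h : a = b) :
    cast (congrArg G h) (y a) = y b := by subst h; rfl

lemma f_cast {a b : ℕ} (h : a = b) (x : G (a + 1)) :
    f b (cast (congrArg G (by omega : a + 1 = b + 1)) x) = cast (congrArg G h) (f a x) := by
  subst h; rfl

lemma towerCompMap_succ_left (i k : ℕ) (x : G (i + 1 + k)) :
    f i (towerCompMap f (i + 1) k x)
      = towerCompMap f i (k + 1) (cast (congrArg G (by omega : i + 1 + k = i + (k + 1))) x) := by
  induction k with
  | zero => simp [towerCompMap]
  | succ k ih =>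
      show f i (towerCompMap f (i + 1) k (f (i + 1 + k) x)) =
        towerCompMap f i (k + 1) (f (i + (k + 1)) (cast _ x))
      rw [ih]
      congr 1
      exact (f_cast f (show i + 1 + k = i + (k + 1) by omega) x).symm

end

/-- If a tower of abelian groups `{G n}` satisfies the Mittag-Leffler condition, then
`lim¹ G n = 0`, i.e. the map `∏ G n → ∏ G n`, `(x n) ↦ (x n - f n (x (n+1)))`, is
surjective. -/
theorem lim1_eq_zero_of_mittagLeffler
    {G : ℕ → Type*} [∀ n, AddCommGroup (G n)] (f : ∀ n, G (n + 1) →+ G n)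
    (hML : TowerMittagLeffler f) :
    Function.Surjective (fun x : ∀ n, G n => fun n => x n - f n (x (n + 1))) := by
  classical
  intro y
  let j : ℕ → ℕ := fun n => (hML n).choose
  have hj : ∀ n k, (towerCompMap f n (j n + k)).range = (towerCompMap f n (j n)).range :=
    fun n => (hML n).choose_spec
  let H : ∀ n, AddSubgroup (G n) := fun n => (towerCompMap f n (j n)).range
  -- ranges of long composites equal the stable image
  have range_eq : ∀ n k, j n ≤ k → (towerCompMap f n k).range = H n := by
    intro n k hk
    obtain ⟨t, rfl⟩ := Nat.exists_eq_add_of_le hk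
    exact hj n t
  have hmem : ∀ n k, j n ≤ k → ∀ x : G (n + k), towerCompMap f n k x ∈ H n := by
    intro n k hk x
    rw [← range_eq n k hk]
    exact ⟨x, rfl⟩
  -- the restricted maps f n : H (n+1) → H n are surjective
  have hsurj : ∀ n, ∀ h ∈ H n, ∃ h', h' ∈ H (n + 1) ∧ f n h' = h := by
    intro n h hh
    have h1 : h ∈ (towerCompMap f n ((j n + j (n + 1)) + 1)).range :=
      (range_eq n ((j n + j (n + 1)) + 1) (by omega)).symm ▸ hh
    obtain ⟨g, hg⟩ := h1
    refine ⟨towerCompMap f (n + 1) (j n + j (n + 1))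
      (cast (congrArg G (by omega : n + ((j n + j (n + 1)) + 1) = n + 1 + (j n + j (n + 1)))) g),
      ?_, ?_⟩
    · rw [← range_eq (n + 1) (j n + j (n + 1)) (by omega)]
      exact ⟨_, rfl⟩
    · rw [towerCompMap_succ_left, cast_cast, cast_eq]
      exact hg
  -- choice of cutoffs
  let c : ℕ → ℕ := fun n => (Finset.range (n + 1)).sup j + 1
  have hc_mono : ∀ n, c n ≤ c (n + 1) := by
    intro n
    have : (Finset.range (n + 1)).sup j ≤ (Finset.range (n + 2)).sup j :=
      Finset.sup_mono (Finset.range_subset_range.mpr (by omega))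
    simpa [c] using this
  have hc_gt : ∀ n, j n < c n := by
    intro n
    exact Nat.lt_succ_of_le (Finset.le_sup (Finset.mem_range.mpr (by omega)))
  -- the approximate solution
  let T : ∀ n, ℕ → G n := fun n k => towerCompMap f n k (y (n + k))
  let z : ∀ n, G n := fun n => ∑ k ∈ Finset.range (c n), T n k
  let d : ∀ n, G n := fun n => ∑ k ∈ Finset.Ico (c n) (c (n + 1) + 1), T n k
  have hd_mem : ∀ n, d n ∈ H n := by
    intro n
    refine AddSubgroup.sum_mem _ fun k hk => ?_
    have : j n ≤ k := by
      have := (Finset.mem_Ico.mp hk).1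
      have := hc_gt n
      omega
    exact hmem n k this _
  have key : ∀ n, z n - f n (z (n + 1)) = y n - d n := by
    intro n
    have e1 : f n (z (n + 1)) = ∑ k ∈ Finset.range (c (n + 1)), T n (k + 1) := by
      show f n (∑ k ∈ Finset.range (c (n + 1)), T (n + 1) k) = _
      rw [map_sum]
      refine Finset.sum_congr rfl fun k _ => ?_
      show f n (towerCompMap f (n + 1) k (y (n + 1 + k))) = _
      rw [towerCompMap_succ_left]
      show towerCompMap f n (k + 1) _ = towerCompMap f n (k + 1) (y (n + (k + 1)))
      congr 1
      exact cast_apply' y (by omega)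
    have e2 : ∑ k ∈ Finset.range (c (n + 1)), T n (k + 1)
        = ∑ k ∈ Finset.Ico 1 (c (n + 1) + 1), T n k := by
      rw [Finset.sum_Ico_eq_sum_range]
      simp only [Nat.add_sub_cancel]
      refine Finset.sum_congr rfl fun k _ => ?_
      rw [Nat.add_comm 1 k]
    have e3 : ∑ k ∈ Finset.Ico 1 (c (n + 1) + 1), T n k
        = (∑ k ∈ Finset.Ico 1 (c n), T n k) + d n := by
      rw [← Finset.sum_Ico_consecutive _ (Nat.succ_le_succ (Nat.zero_le _) : 1 ≤ c n) ((hc_mono n).trans (Nat.le_succ _))]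
    have e4 : z n = T n 0 + ∑ k ∈ Finset.Ico 1 (c n), T n k := by
      show ∑ k ∈ Finset.range (c n), T n k = _
      rw [Finset.range_eq_Ico, ← Finset.sum_Ico_consecutive _ (by omega : (0:ℕ) ≤ 1) (Nat.succ_le_succ (Nat.zero_le _) : 1 ≤ c n)]
      simp
      rfl
    have e5 : T n 0 = y n := rfl
    rw [e1, e2, e3, e4, e5]
    abel
  -- the correction sequence in H
  let w : ∀ n, {x : G n // x ∈ H n} :=
    Nat.rec ⟨0, zero_mem _⟩ (fun n wn =>
      ⟨(hsurj n (wn.1 - d n) (sub_mem wn.2 (hd_mem n))).choose,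
       (hsurj n (wn.1 - d n) (sub_mem wn.2 (hd_mem n))).choose_spec.1⟩)
  have hw : ∀ n, f n (w (n + 1)).1 = (w n).1 - d n := fun n =>
    (hsurj n ((w n).1 - d n) (sub_mem (w n).2 (hd_mem n))).choose_spec.2
  refine ⟨fun n => z n + (w n).1, ?_⟩
  funext n
  show z n + (w n).1 - f n (z (n + 1) + (w (n + 1)).1) = y n
  rw [map_add, hw n]
  have e : z n + (w n).1 - (f n (z (n + 1)) + ((w n).1 - d n))
      = (z n - f n (z (n + 1))) + d n := by abel
  rw [e, key n]
  abel
end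

section
/- Let {G_n, f_n : G_{n+1} → G_n} be a tower of abelian groups in which every group G_n is countable. If lim¹ G_n = 0, i.e. the homomorphism ∏_n G_n → ∏_n G_n sending (x_n) to (x_n − f_n(x_{n+1})) is surjective, then the tower {G_n} satisfies the Mittag-Leffler condition. -/
/-- Abstract diagonal argument. -/
lemma tower_uncountable_aux {A : Type*} [AddCommGroup A] [Countable A]
    (H : ℕ → AddSubgroup A) (g : ℕ → A)
    (hg2 : ∀ t, g t ∉ H (t + 1))
    (hsol : ∀ ε : ℕ → Bool, ∃ x : A, ∀ t,
      x - ∑ s ∈ Finset.range t, (if ε s = true then g s else 0) ∈ H t) : False := by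
  choose X hX using hsol
  have hinj : Function.Injective X := by
    intro ε ε' hXe
    by_contra hne
    have hex : ∃ t, ε t ≠ ε' t := by
      by_contra h
      push_neg at h
      exact hne (funext h)
    classical
    let t := Nat.find hex
    have ht : ε t ≠ ε' t := Nat.find_spec hex
    have htmin : ∀ s < t, ε s = ε' s := fun s hs => by
      by_contra h; exact Nat.find_min hex hs h
    have h1 := hX ε (t + 1)
    have h2 := hX ε' (t + 1)
    set Sa := ∑ s ∈ Finset.range (t+1), (if ε s = true then g s else 0) with hSa
    set Sb := ∑ s ∈ Finset.range (t+1), (if ε' s = true then g s else 0) with hSb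
    have hmem : Sb - Sa ∈ H (t+1) := by
      have h3 := sub_mem h1 h2
      rw [hXe, show (X ε' - Sa) - (X ε' - Sb) = Sb - Sa from by abel] at h3
      exact h3
    have heqsum : (∑ s ∈ Finset.range t, (if ε s = true then g s else 0)) =
        ∑ s ∈ Finset.range t, (if ε' s = true then g s else 0) :=
      Finset.sum_congr rfl (fun s hs => by rw [htmin s (Finset.mem_range.mp hs)])
    rw [hSa, hSb, Finset.sum_range_succ, Finset.sum_range_succ, heqsum] at hmem
    have hmem' : (if ε' t = true then g t else 0) - (if ε t = true then g t else 0) ∈ H (t+1) := by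
      simpa using hmem
    rcases Bool.eq_false_or_eq_true (ε t) with h | h <;>
      rcases Bool.eq_false_or_eq_true (ε' t) with h' | h'
    · exact ht (h.trans h'.symm)
    · rw [h, h'] at hmem'; simp at hmem'; exact hg2 t hmem'
    · rw [h, h'] at hmem'; simp at hmem'; exact hg2 t hmem'
    · exact ht (h.trans h'.symm)
  obtain ⟨e, he⟩ := Countable.exists_injective_nat A
  classical
  have : Function.Injective (fun S : Set ℕ => e (X (fun n => decide (n ∈ S)))) := by
    intro S S' h
    have h2 := hinj (he h)
    ext n
    have := congrFun h2 n
    simpa using this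
  exact Function.cantor_injective _ this

/-- A sequence supported on the indices `i + m t`, with value `v t` there. -/
noncomputable def spikeSeq {G : ℕ → Type*} [∀ n, AddCommGroup (G n)] (i : ℕ) (m : ℕ → ℕ)
    (v : ∀ t, G (i + m t)) : ∀ n, G n := fun n =>
  letI := Classical.dec (∃ t, i + m t = n)
  if h : ∃ t, i + m t = n then cast (congrArg G h.choose_spec) (v h.choose) else 0

lemma spikeSeq_apply {G : ℕ → Type*} [∀ n, AddCommGroup (G n)] {i : ℕ} {m : ℕ → ℕ}
    (hm : Function.Injective m) (v : ∀ t, G (i + m t)) (s : ℕ) :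
    spikeSeq i m v (i + m s) = v s := by
  have hex : ∃ t, i + m t = i + m s := ⟨s, rfl⟩
  have key : ∀ (t : ℕ) (h : i + m t = i + m s),
      cast (congrArg G h) (v t) = v s := by
    intro t h
    have ht : t = s := hm (Nat.add_left_cancel h)
    subst ht
    exact cast_eq _ _
  rw [spikeSeq, dif_pos hex]
  exact key hex.choose hex.choose_spec

lemma spikeSeq_apply_zero {G : ℕ → Type*} [∀ n, AddCommGroup (G n)] {i : ℕ} {m : ℕ → ℕ}
    (v : ∀ t, G (i + m t)) (k : ℕ) (hk : ¬∃ s, m s = k) :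
    spikeSeq i m v (i + k) = 0 := by
  rw [spikeSeq, dif_neg]
  rintro ⟨t, ht⟩
  exact hk ⟨t, Nat.add_left_cancel ht⟩

lemma tower_telescope {G : ℕ → Type*} [∀ n, AddCommGroup (G n)]
    (f : ∀ n, G (n + 1) →+ G n) (i : ℕ) (x y : ∀ n, G n)
    (hx : ∀ n, x n - f n (x (n + 1)) = y n) (M : ℕ) :
    x i = (∑ k ∈ Finset.range M, towerCompMap f i k (y (i + k)))
        + towerCompMap f i M (x (i + M)) := by
  induction M with
  | zero => simp [towerCompMap]
  | succ M ih =>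
    rw [ih, Finset.sum_range_succ, add_assoc]
    congr 1
    have hxm : x (i + M) = y (i + M) + f (i + M) (x (i + M + 1)) := by
      rw [← hx (i + M)]; abel
    rw [hxm, map_add]
    rfl

def iterSeq (k : ℕ → ℕ) : ℕ → ℕ
  | 0 => 0
  | t + 1 => iterSeq k t + k (iterSeq k t)

lemma towerCompMap_range_antitone {G : ℕ → Type*} [∀ n, AddCommGroup (G n)]
    (f : ∀ n, G (n + 1) →+ G n) (i j : ℕ) :
    ∀ k, (towerCompMap f i (j + k)).range ≤ (towerCompMap f i j).range := by
  intro k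
  induction k with
  | zero => exact le_rfl
  | succ k ih =>
    refine le_trans ?_ ih
    rintro x ⟨z, rfl⟩
    exact ⟨f (i + (j + k)) z, rfl⟩

/-- (McGibbon–Møller.)  If `{G n}` is a tower of countable abelian groups with
`lim¹ G n = 0` (i.e. the map `∏ G n → ∏ G n`, `(x n) ↦ (x n - f n (x (n+1)))`, is
surjective), then the tower satisfies the Mittag-Leffler condition. -/
theorem mittagLeffler_of_lim1_eq_zero_of_countable
    {G : ℕ → Type*} [∀ n, AddCommGroup (G n)] [∀ n, Countable (G n)]
    (f : ∀ n, G (n + 1) →+ G n)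
    (hlim1 : Function.Surjective (fun x : ∀ n, G n => fun n => x n - f n (x (n + 1)))) :
    TowerMittagLeffler f := by
  intro i
  by_contra hML
  push_neg at hML
  choose k hk using hML
  set m : ℕ → ℕ := iterSeq k with hmdef
  have hmS : ∀ t, m (t + 1) = m t + k (m t) := fun t => rfl
  have hkpos : ∀ j, 0 < k j := by
    intro j
    by_contra h
    push_neg at h
    exact hk j (by rw [Nat.le_zero.mp h]; rfl)
  have hmmono : StrictMono m := strictMono_nat_of_lt_succ fun t => by
    rw [hmS]; have := hkpos (m t); omega
  have hlt : ∀ t, (towerCompMap f i (m (t + 1))).range < (towerCompMap f i (m t)).range := by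
    intro t
    rw [hmS]
    exact lt_of_le_of_ne (towerCompMap_range_antitone f i (m t) (k (m t))) (hk (m t))
  have hex : ∀ t, ∃ g, g ∉ (towerCompMap f i (m (t + 1))).range ∧
      ∃ u, towerCompMap f i (m t) u = g := by
    intro t
    obtain ⟨g, hg1, hg2⟩ := SetLike.exists_of_lt (hlt t)
    exact ⟨g, hg2, hg1⟩
  choose g hg2 u hu using hex
  refine tower_uncountable_aux (fun t => (towerCompMap f i (m t)).range) g hg2 ?_
  intro ε
  set v : ∀ t, G (i + m t) := fun t => if ε t = true then u t else 0 with hv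
  obtain ⟨x, hxeq⟩ := hlim1 (spikeSeq i m v)
  have hx : ∀ n, x n - f n (x (n + 1)) = spikeSeq i m v n := fun n => congrFun hxeq n
  refine ⟨x i, fun t => ?_⟩
  have htel := tower_telescope f i x _ hx (m t)
  have hsum : (∑ j ∈ Finset.range (m t), towerCompMap f i j (spikeSeq i m v (i + j)))
      = ∑ s ∈ Finset.range t, (if ε s = true then g s else 0) := by
    have hsub : (Finset.range t).image m ⊆ Finset.range (m t) := by
      intro a ha
      simp only [Finset.mem_image, Finset.mem_range] at ha ⊢
      obtain ⟨s, hs, rfl⟩ := ha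
      exact hmmono hs
    rw [← Finset.sum_subset hsub (fun a ha ha' => ?_),
      Finset.sum_image (fun a _ b _ h => hmmono.injective h)]
    · refine Finset.sum_congr rfl fun s _ => ?_
      rw [spikeSeq_apply hmmono.injective v s]
      by_cases hes : ε s = true
      · simp only [hv, if_pos hes, hu]
      · simp only [hv, if_neg hes, map_zero]
    · have hnot : ¬∃ s, m s = a := by
        rintro ⟨s, rfl⟩
        refine ha' ?_
        simp only [Finset.mem_image, Finset.mem_range]
        exact ⟨s, hmmono.lt_iff_lt.mp (Finset.mem_range.mp ha), rfl⟩
      rw [spikeSeq_apply_zero v a hnot, map_zero]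
  have hfin : x i - (∑ s ∈ Finset.range t, (if ε s = true then g s else 0))
      = towerCompMap f i (m t) (x (i + m t)) := by
    rw [htel, hsum]; abel
  rw [hfin]
  exact ⟨x (i + m t), rfl⟩
end
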